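/- Let A be an affine hyperplane arrangement in ℝ^d, with characteristic polynomial coefficients a_k defined by χ_A(t) = Σ_{k=0}^d (−1)^{d−k} a_k t^k. Then the total number of closed chambers of A equals Σ_{k=0}^d a_k = (−1)^d χ_A(−1). (Zaslavsky's first formula, derived from the projection-counting identity.) -/

import Mathlib

open scoped RealInnerProductSpace Pointwise Classical
open Set

noncomputable section

abbrev E (d : ℕ) : Type := EuclideanSpace ℝ (Fin d)

variable {d : ℕ}

/-- Positive hull: all finite nonnegative combinations of elements of `A`. -/
def posHull (A : Set (E d)) : Set (E d) :=
  {x | ∃ (n : ℕ) (c : Fin n → ℝ) (v : Fin n → E d),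
    (∀ i, 0 ≤ c i) ∧ (∀ i, v i ∈ A) ∧ x = ∑ i, c i • v i}

/-- Dual (polar) cone. -/
def polarCone (C : Set (E d)) : Set (E d) := {z | ∀ y ∈ C, ⟪z, y⟫ ≤ 0}

/-- A polyhedral cone: finite intersection of linear closed half-spaces. -/
def IsPolyCone (C : Set (E d)) : Prop :=
  ∃ (m : ℕ) (y : Fin m → E d), C = {z | ∀ i, ⟪z, y i⟫ ≤ 0}

/-- A polyhedral set: finite intersection of closed half-spaces. -/
def IsPolyhedron (P : Set (E d)) : Prop :=
  ∃ (m : ℕ) (y : Fin m → E d) (c : Fin m → ℝ), P = {z | ∀ i, ⟪z, y i⟫ ≤ c i}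

/-- Faces of `P`: `P` itself, or intersections with supporting hyperplanes. -/
def IsFaceOf (P F : Set (E d)) : Prop :=
  F = P ∨ ∃ (y : E d) (c : ℝ), (∀ z ∈ P, ⟪y, z⟫ ≤ c) ∧ F = {z | z ∈ P ∧ ⟪y, z⟫ = c}

/-- Dimension of a set: dimension of its affine hull. -/
def sdim (F : Set (E d)) : ℕ := Module.finrank ℝ (affineSpan ℝ F).direction

/-- The `k`-dimensional (nonempty) faces of `P`. -/
def facesOfDim (P : Set (E d)) (k : ℕ) : Set (Set (E d)) :=
  {F | IsFaceOf P F ∧ F.Nonempty ∧ sdim F = k}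

/-- Tangent cone of `P` at a point `f₀`. -/
def tangentConeOf (P : Set (E d)) (f₀ : E d) : Set (E d) :=
  {u | ∃ δ : ℝ, 0 < δ ∧ f₀ + δ • u ∈ P}

/-- Normal cone of `P` at its face `F`: polar of the tangent cone at any
relative interior point of `F`. -/
def normalCone (P F : Set (E d)) : Set (E d) :=
  {z | ∀ f₀ ∈ intrinsicInterior ℝ F, ∀ u ∈ tangentConeOf P f₀, ⟪z, u⟫ ≤ 0}

/-- `y` is a nearest point of `P` to `x`. -/
def IsNearestPt (P : Set (E d)) (x y : E d) : Prop :=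
  y ∈ P ∧ ∀ z ∈ P, dist x y ≤ dist x z

/-- `dim(x,P) = k`: the metric projection of `x` onto `P` lies in the relative
interior of a `k`-dimensional face of `P`. -/
def projDimEq (P : Set (E d)) (x : E d) (k : ℕ) : Prop :=
  ∃ y F, IsNearestPt P x y ∧ IsFaceOf P F ∧ y ∈ intrinsicInterior ℝ F ∧ sdim F = k

def IsHyperplane (H : Set (E d)) : Prop :=
  ∃ (y : E d) (c : ℝ), y ≠ 0 ∧ H = {z | ⟪y, z⟫ = c}

def IsLinearHyperplane (H : Set (E d)) : Prop :=
  ∃ y : E d, y ≠ 0 ∧ H = {z | ⟪y, z⟫ = 0}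

/-- Closed chambers of the complement of the set `S`. -/
def IsChamberOfUnion (S P : Set (E d)) : Prop :=
  ∃ x : E d, x ∉ S ∧ P = closure (connectedComponentIn Sᶜ x)

/-- Closed chambers of the hyperplane arrangement `A`. -/
def IsChamber (A : Finset (Set (E d))) (P : Set (E d)) : Prop :=
  IsChamberOfUnion (⋃ H ∈ A, H) P

/-- Intersection of a finite subcollection of hyperplanes (`⊤` for `∅`). -/
def interSet (B : Finset (Set (E d))) : Set (E d) := ⋂ H ∈ B, H

/-- The unsigned coefficient `a_k` of the characteristic polynomial:
`χ_A(t) = Σ_k (-1)^(d-k) a_k t^k` via Whitney's formula. -/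
def charCoeff (A : Finset (Set (E d))) (k : ℕ) : ℤ :=
  (-1 : ℤ) ^ (d - k) *
    ∑ B ∈ A.powerset,
      if (interSet B).Nonempty ∧ sdim (interSet B) = k then (-1 : ℤ) ^ B.card else 0

namespace Zas

/-- Same (strict) side of `H`. -/
def Side (H : Set (E d)) (x z : E d) : Prop := segment ℝ x z ∩ H = ∅

lemma inner_affine (y : E d) {a b : ℝ} (x z : E d) :
    ⟪y, a • x + b • z⟫ = a * ⟪y, x⟫ + b * ⟪y, z⟫ := by
  rw [inner_add_right, real_inner_smul_right, real_inner_smul_right]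

lemma side_iff {y : E d} {c : ℝ} {x z : E d} (hx : ⟪y, x⟫ ≠ c) (hz : ⟪y, z⟫ ≠ c) :
    Side {w | ⟪y, w⟫ = c} x z ↔ 0 < (⟪y, x⟫ - c) * (⟪y, z⟫ - c) := by
  constructor
  · intro hS
    rcases lt_or_gt_of_ne (sub_ne_zero.mpr hx) with h1 | h1 <;>
      rcases lt_or_gt_of_ne (sub_ne_zero.mpr hz) with h2 | h2
    · exact mul_pos_of_neg_of_neg h1 h2
    · exfalso
      set fx := ⟪y, x⟫ - c with hfx
      set fz := ⟪y, z⟫ - c with hfz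
      have hd : fz - fx > 0 := by linarith
      set t : ℝ := (-fx) / (fz - fx) with ht
      have ht0 : 0 ≤ t := div_nonneg (by linarith) (by linarith)
      have ht1 : t ≤ 1 := by
        rw [div_le_one hd]; linarith
      have hmem : (1 - t) • x + t • z ∈ segment ℝ x z :=
        ⟨1 - t, t, by linarith, ht0, by ring, rfl⟩
      have : ⟪y, (1 - t) • x + t • z⟫ = c := by
        rw [inner_affine]
        have : (1 - t) * fx + t * fz = 0 := by
          rw [ht]; field_simp; ring
        have hfx' : ⟪y, x⟫ = fx + c := by rw [hfx]; ring
        have hfz' : ⟪y, z⟫ = fz + c := by rw [hfz]; ring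
        rw [hfx', hfz']; linear_combination this
      exact (Set.eq_empty_iff_forall_notMem.mp hS _ ⟨hmem, this⟩)
    · exfalso
      set fx := ⟪y, x⟫ - c with hfx
      set fz := ⟪y, z⟫ - c with hfz
      have hd : fx - fz > 0 := by linarith
      set t : ℝ := fx / (fx - fz) with ht
      have ht0 : 0 ≤ t := div_nonneg (by linarith) (by linarith)
      have ht1 : t ≤ 1 := by rw [div_le_one hd]; linarith
      have hmem : (1 - t) • x + t • z ∈ segment ℝ x z :=
        ⟨1 - t, t, by linarith, ht0, by ring, rfl⟩
      have : ⟪y, (1 - t) • x + t • z⟫ = c := by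
        rw [inner_affine]
        have : (1 - t) * fx + t * fz = 0 := by
          rw [ht]; field_simp; ring
        have hfx' : ⟪y, x⟫ = fx + c := by rw [hfx]; ring
        have hfz' : ⟪y, z⟫ = fz + c := by rw [hfz]; ring
        rw [hfx', hfz']; linear_combination this
      exact (Set.eq_empty_iff_forall_notMem.mp hS _ ⟨hmem, this⟩)
    · exact mul_pos h1 h2
  · intro hpos
    rw [Side, Set.eq_empty_iff_forall_notMem]
    rintro p ⟨⟨a, b, ha, hb, hab, rfl⟩, hp⟩
    simp only [Set.mem_setOf_eq] at hp
    rw [inner_affine] at hp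
    have key : a * (⟪y, x⟫ - c) + b * (⟪y, z⟫ - c) = 0 := by
      linear_combination hp - c * hab
    rcases (mul_pos_iff.mp hpos) with ⟨h1, h2⟩ | ⟨h1, h2⟩
    · rcases eq_or_lt_of_le ha with rfl | ha'
      · have hb1 : b = 1 := by linarith
        rw [hb1] at key; linarith
      · nlinarith [mul_pos ha' h1, mul_nonneg hb h2.le]
    · rcases eq_or_lt_of_le ha with rfl | ha'
      · have hb1 : b = 1 := by linarith
        rw [hb1] at key; linarith
      · have h3 : a * (⟪y, x⟫ - c) < 0 := mul_neg_of_pos_of_neg ha' h1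
        have h4 : b * (⟪y, z⟫ - c) ≤ 0 := mul_nonpos_of_nonneg_of_nonpos hb h2.le
        linarith

lemma side_refl {H : Set (E d)} {x : E d} (hx : x ∉ H) : Side H x x := by
  rw [Side, segment_same, Set.eq_empty_iff_forall_notMem]
  rintro p ⟨rfl, hp⟩; exact hx hp

lemma side_symm {H : Set (E d)} {x z : E d} (h : Side H x z) : Side H z x := by
  rwa [Side, segment_symm]

lemma not_mem_of_side {H : Set (E d)} {x z : E d} (h : Side H x z) : z ∉ H := fun hz =>
  Set.eq_empty_iff_forall_notMem.mp h z ⟨right_mem_segment ℝ x z, hz⟩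

lemma not_mem_of_side' {H : Set (E d)} {x z : E d} (h : Side H x z) : x ∉ H := fun hz =>
  Set.eq_empty_iff_forall_notMem.mp h x ⟨left_mem_segment ℝ x z, hz⟩

lemma side_trans {H : Set (E d)} (hH : IsHyperplane H) {x z w : E d}
    (h1 : Side H x z) (h2 : Side H z w) : Side H x w := by
  obtain ⟨y, c, hy, rfl⟩ := hH
  have hx := not_mem_of_side' h1
  have hz := not_mem_of_side h1
  have hw := not_mem_of_side h2
  rw [side_iff hx hz] at h1
  rw [side_iff hz hw] at h2
  rw [side_iff hx hw]
  nlinarith [mul_pos h1 h2, sq_nonneg (⟪y, z⟫ - c)]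

end Zas

namespace Zas2
open Zas

def cell (L : Multiset (Set (E d))) (x : E d) : Set (E d) := {z | ∀ H ∈ L, Side H x z}

def U (L : Multiset (Set (E d))) : Set (E d) := ⋃₀ {H | H ∈ L}

def regions (L : Multiset (Set (E d))) : Set (Set (E d)) := {C | ∃ x, x ∉ U L ∧ C = cell L x}

lemma mem_U {L : Multiset (Set (E d))} {x : E d} : x ∈ U L ↔ ∃ H ∈ L, x ∈ H := by
  simp [U, Set.mem_sUnion]

lemma self_mem_cell {L : Multiset (Set (E d))} {x : E d} (hx : x ∉ U L) : x ∈ cell L x :=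
  fun H hH => side_refl (fun hxH => hx (mem_U.mpr ⟨H, hH, hxH⟩))

lemma cell_subset_compl {L : Multiset (Set (E d))} {x z : E d} (hz : z ∈ cell L x) : z ∉ U L := by
  intro hzU
  obtain ⟨H, hH, hzH⟩ := mem_U.mp hzU
  exact not_mem_of_side (hz H hH) hzH

lemma cell_eq {L : Multiset (Set (E d))} (hL : ∀ H ∈ L, IsHyperplane H) {x z : E d}
    (hz : z ∈ cell L x) : cell L z = cell L x := by
  ext w
  constructor
  · exact fun hw H hH => side_trans (hL H hH) (hz H hH) (hw H hH)
  · exact fun hw H hH => side_trans (hL H hH) (side_symm (hz H hH)) (hw H hH)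

lemma mem_cell_iff_cell_eq {L : Multiset (Set (E d))} (hL : ∀ H ∈ L, IsHyperplane H)
    {x z : E d} (hx : x ∉ U L) : z ∈ cell L x ↔ (z ∉ U L ∧ cell L z = cell L x) := by
  constructor
  · exact fun h => ⟨cell_subset_compl h, cell_eq hL h⟩
  · rintro ⟨hz, he⟩; rw [← he]; exact self_mem_cell hz

lemma cell_cons {H : Set (E d)} {L : Multiset (Set (E d))} {x : E d} :
    cell (H ::ₘ L) x = cell L x ∩ {z | Side H x z} := by
  ext z
  simp only [cell, Set.mem_setOf_eq, Multiset.mem_cons, Set.mem_inter_iff]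
  constructor
  · exact fun h => ⟨fun K hK => h K (Or.inr hK), h H (Or.inl rfl)⟩
  · rintro ⟨h1, h2⟩ K (rfl | hK)
    · exact h2
    · exact h1 K hK

/-- A side-set is one of the two open halfspaces. -/
lemma side_iff' {y : E d} {c : ℝ} {x z : E d} (hx : ⟪y, x⟫ ≠ c) :
    Side {w | ⟪y, w⟫ = c} x z ↔ 0 < (⟪y, x⟫ - c) * (⟪y, z⟫ - c) := by
  by_cases hz : ⟪y, z⟫ = c
  · constructor
    · intro h
      exact absurd hz (not_mem_of_side (H := {w | ⟪y, w⟫ = c}) h)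
    · intro h; rw [hz] at h; simp at h
  · exact side_iff hx hz

lemma sideSet_pos {y : E d} {c : ℝ} {x : E d} (hx : c < ⟪y, x⟫) :
    {z | Side {w | ⟪y, w⟫ = c} x z} = {z | c < ⟪y, z⟫} := by
  ext z
  rw [Set.mem_setOf_eq, side_iff' (by linarith), Set.mem_setOf_eq]
  constructor
  · intro h; nlinarith
  · intro h; nlinarith

lemma sideSet_neg {y : E d} {c : ℝ} {x : E d} (hx : ⟪y, x⟫ < c) :
    {z | Side {w | ⟪y, w⟫ = c} x z} = {z | ⟪y, z⟫ < c} := by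
  ext z
  rw [Set.mem_setOf_eq, side_iff' (by linarith), Set.mem_setOf_eq]
  constructor
  · intro h; nlinarith
  · intro h; nlinarith

lemma isLinearMap_inner (y : E d) : IsLinearMap ℝ (fun z : E d => ⟪y, z⟫) :=
  ⟨fun a b => inner_add_right y a b, fun r a => real_inner_smul_right y a r⟩

lemma continuous_inner_right (y : E d) : Continuous (fun z : E d => ⟪y, z⟫) :=
  Continuous.inner continuous_const continuous_id

lemma isOpen_gt (y : E d) (c : ℝ) : IsOpen {z : E d | c < ⟪y, z⟫} :=
  isOpen_lt continuous_const (continuous_inner_right y)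

lemma isOpen_lt' (y : E d) (c : ℝ) : IsOpen {z : E d | ⟪y, z⟫ < c} :=
  isOpen_lt (continuous_inner_right y) continuous_const

lemma sideSet_open {H : Set (E d)} (hH : IsHyperplane H) {x : E d} (hx : x ∉ H) :
    IsOpen {z | Side H x z} := by
  obtain ⟨y, c, hy, rfl⟩ := hH
  rcases lt_or_gt_of_ne (show ⟪y, x⟫ ≠ c from hx) with h | h
  · rw [sideSet_neg h]; exact isOpen_lt' y c
  · rw [sideSet_pos h]; exact isOpen_gt y c

lemma sideSet_convex {H : Set (E d)} (hH : IsHyperplane H) {x : E d} (hx : x ∉ H) :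
    Convex ℝ {z | Side H x z} := by
  obtain ⟨y, c, hy, rfl⟩ := hH
  rcases lt_or_gt_of_ne (show ⟪y, x⟫ ≠ c from hx) with h | h
  · rw [sideSet_neg h]; exact convex_halfSpace_lt (isLinearMap_inner y) c
  · rw [sideSet_pos h]; exact convex_halfSpace_gt (isLinearMap_inner y) c

lemma cell_eq_biInter {L : Multiset (Set (E d))} {x : E d} :
    cell L x = ⋂ H ∈ L.toFinset, {z | Side H x z} := by
  ext z
  simp [cell]

lemma not_mem_hyp {L : Multiset (Set (E d))} {x : E d} (hx : x ∉ U L) {H : Set (E d)}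
    (hH : H ∈ L) : x ∉ H := fun h => hx (mem_U.mpr ⟨H, hH, h⟩)

lemma cell_open {L : Multiset (Set (E d))} (hL : ∀ H ∈ L, IsHyperplane H) {x : E d}
    (hx : x ∉ U L) : IsOpen (cell L x) := by
  rw [cell_eq_biInter]
  refine isOpen_biInter_finset (fun H hH => ?_)
  rw [Multiset.mem_toFinset] at hH
  exact sideSet_open (hL H hH) (not_mem_hyp hx hH)

lemma cell_convex {L : Multiset (Set (E d))} (hL : ∀ H ∈ L, IsHyperplane H) {x : E d}
    (hx : x ∉ U L) : Convex ℝ (cell L x) := by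
  rw [cell_eq_biInter]
  refine convex_iInter (fun H => convex_iInter (fun hH => ?_))
  rw [Multiset.mem_toFinset] at hH
  exact sideSet_convex (hL H hH) (not_mem_hyp hx hH)

lemma regions_finite {L : Multiset (Set (E d))} (hL : ∀ H ∈ L, IsHyperplane H) :
    (regions L).Finite := by
  induction L using Multiset.induction with
  | empty =>
    apply Set.Finite.subset (Set.finite_singleton (Set.univ : Set (E d)))
    rintro C ⟨x, hx, rfl⟩
    simp only [Set.mem_singleton_iff]
    ext z; simp [cell]
  | cons H L ih =>
    have hL' : ∀ K ∈ L, IsHyperplane K := fun K hK => hL K (Multiset.mem_cons_of_mem hK)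
    obtain ⟨y, c, hy, hHe⟩ := hL H (Multiset.mem_cons_self H L)
    apply Set.Finite.subset (((ih hL').image (· ∩ {z | c < ⟪y, z⟫})).union
      ((ih hL').image (· ∩ {z | ⟪y, z⟫ < c})))
    rintro C ⟨x, hx, rfl⟩
    have hxL : x ∉ U L := fun h => by
      obtain ⟨K, hK, hxK⟩ := mem_U.mp h
      exact hx (mem_U.mpr ⟨K, Multiset.mem_cons_of_mem hK, hxK⟩)
    have hxH : x ∉ H := not_mem_hyp hx (Multiset.mem_cons_self H L)
    rw [hHe] at hxH
    rcases lt_or_gt_of_ne (show ⟪y, x⟫ ≠ c from hxH) with h | h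
    · right
      exact ⟨cell L x, ⟨x, hxL, rfl⟩, by rw [cell_cons, hHe, sideSet_neg h]⟩
    · left
      exact ⟨cell L x, ⟨x, hxL, rfl⟩, by rw [cell_cons, hHe, sideSet_pos h]⟩

end Zas2

namespace Zas3
open Zas Zas2

lemma interior_closure_convex_open {C : Set (E d)} (hC : Convex ℝ C) (ho : IsOpen C) :
    interior (closure C) = C := by
  apply Set.Subset.antisymm
  · rcases C.eq_empty_or_nonempty with rfl | ⟨x, hx⟩
    · simp
    intro y hy
    by_cases hxy : y = x
    · rwa [hxy]
    obtain ⟨ε, hε, hball⟩ := Metric.isOpen_iff.mp isOpen_interior y hy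
    set t : ℝ := ε / (2 * ‖y - x‖) with htdef
    have hnorm : (0 : ℝ) < ‖y - x‖ := by
      rw [norm_pos_iff]; exact sub_ne_zero.mpr hxy
    have ht : 0 < t := div_pos hε (by positivity)
    set z : E d := y + t • (y - x) with hzdef
    have hz : z ∈ closure C := by
      apply interior_subset
      apply hball
      rw [Metric.mem_ball, dist_eq_norm]
      have : z - y = t • (y - x) := by rw [hzdef]; abel
      rw [this, norm_smul, Real.norm_eq_abs, abs_of_pos ht, htdef]
      rw [div_mul_eq_mul_div, mul_comm]
      rw [div_lt_iff₀ (by positivity)]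
      nlinarith
    have key : (t / (1 + t)) • x + (1 / (1 + t)) • z = y := by
      rw [hzdef]
      match_scalars
      · field_simp; ring
      · field_simp
    have hab : t / (1 + t) + 1 / (1 + t) = 1 := by field_simp; ring
    have hmem := hC.combo_interior_closure_mem_interior (x := x) (y := z)
      (a := t / (1 + t)) (b := 1 / (1 + t))
      (by rwa [ho.interior_eq]) hz (div_pos ht (by linarith)) (by positivity) hab
    rw [key, ho.interior_eq] at hmem
    exact hmem
  · nth_rewrite 1 [← ho.interior_eq]
    exact interior_mono subset_closure

lemma connectedComponentIn_eq_cell {L : Multiset (Set (E d))}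
    (hL : ∀ H ∈ L, IsHyperplane H) {x : E d} (hx : x ∉ U L) :
    connectedComponentIn (U L)ᶜ x = cell L x := by
  apply Set.Subset.antisymm
  · intro z hz
    by_contra hzc
    have hzU : z ∉ U L := connectedComponentIn_subset _ _ hz
    simp only [cell, Set.mem_setOf_eq, not_forall] at hzc
    obtain ⟨H, hH, hside⟩ := hzc
    obtain ⟨y, c, hy, hHe⟩ := hL H hH
    have hxH : ⟪y, x⟫ ≠ c := by
      have := not_mem_hyp hx hH; rw [hHe] at this; exact this
    have hzH : ⟪y, z⟫ ≠ c := by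
      have := not_mem_hyp hzU hH; rw [hHe] at this; exact this
    rw [hHe, side_iff hxH hzH] at hside
    push_neg at hside
    have hprod : (⟪y, x⟫ - c) * (⟪y, z⟫ - c) < 0 :=
      lt_of_le_of_ne hside (mul_ne_zero (sub_ne_zero.mpr hxH) (sub_ne_zero.mpr hzH))
    have hpc : IsPreconnected (connectedComponentIn (U L)ᶜ x) :=
      isPreconnected_connectedComponentIn
    have hsub : connectedComponentIn (U L)ᶜ x ⊆ {w | c < ⟪y, w⟫} ∪ {w | ⟪y, w⟫ < c} := by
      intro w hw
      have hwU : w ∉ U L := connectedComponentIn_subset _ _ hw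
      have hwH : ⟪y, w⟫ ≠ c := by
        have := not_mem_hyp hwU hH; rw [hHe] at this; exact this
      rcases lt_or_gt_of_ne hwH with h | h
      · right; exact h
      · left; exact h
    have hxmem : x ∈ connectedComponentIn (U L)ᶜ x := mem_connectedComponentIn hx
    have hne1 : (connectedComponentIn (U L)ᶜ x ∩ {w | c < ⟪y, w⟫}).Nonempty ∧
        (connectedComponentIn (U L)ᶜ x ∩ {w | ⟪y, w⟫ < c}).Nonempty := by
      rcases mul_neg_iff.mp hprod with ⟨h1, h2⟩ | ⟨h1, h2⟩
      · exact ⟨⟨x, hxmem, by simpa using h1⟩, ⟨z, hz, by simpa using h2⟩⟩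
      · exact ⟨⟨z, hz, by simpa using h2⟩, ⟨x, hxmem, by simpa using h1⟩⟩
    obtain ⟨w, -, hw1, hw2⟩ := hpc {w | c < ⟪y, w⟫} {w | ⟪y, w⟫ < c}
      (isOpen_gt y c) (isOpen_lt' y c) hsub hne1.1 hne1.2
    exact absurd hw2 (by simp only [Set.mem_setOf_eq] at hw1 ⊢; intro h; linarith)
  · exact IsPreconnected.subset_connectedComponentIn
      ((cell_convex hL hx).isPreconnected) (self_mem_cell hx) (fun z hz => cell_subset_compl hz)

lemma chambers_eq_closure_regions {L : Multiset (Set (E d))}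
    (hL : ∀ H ∈ L, IsHyperplane H) :
    {P : Set (E d) | IsChamberOfUnion (U L) P} = closure '' regions L := by
  ext P
  constructor
  · rintro ⟨x, hx, rfl⟩
    exact ⟨cell L x, ⟨x, hx, rfl⟩, by rw [connectedComponentIn_eq_cell hL hx]⟩
  · rintro ⟨C, ⟨x, hx, rfl⟩, rfl⟩
    exact ⟨x, hx, by rw [connectedComponentIn_eq_cell hL hx]⟩

lemma ncard_chambers_eq {L : Multiset (Set (E d))} (hL : ∀ H ∈ L, IsHyperplane H) :
    {P : Set (E d) | IsChamberOfUnion (U L) P}.ncard = (regions L).ncard := by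
  rw [chambers_eq_closure_regions hL]
  apply Set.ncard_image_of_injOn
  rintro C1 ⟨x1, hx1, rfl⟩ C2 ⟨x2, hx2, rfl⟩ h
  have e1 : interior (closure (cell L x1)) = cell L x1 :=
    interior_closure_convex_open (cell_convex hL hx1) (cell_open hL hx1)
  have e2 : interior (closure (cell L x2)) = cell L x2 :=
    interior_closure_convex_open (cell_convex hL hx2) (cell_open hL hx2)
  rw [← e1, ← e2, h]

end Zas3

namespace Zas4
open Zas Zas2 Zas3

variable {y : E d} {c : ℝ}

lemma cells_eq_or_disjoint {L : Multiset (Set (E d))} (hL : ∀ H ∈ L, IsHyperplane H)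
    {x1 x2 : E d} (hx1 : x1 ∉ U L) (hx2 : x2 ∉ U L) :
    cell L x1 = cell L x2 ∨ Disjoint (cell L x1) (cell L x2) := by
  by_cases h : Disjoint (cell L x1) (cell L x2)
  · exact Or.inr h
  · left
    obtain ⟨w, hw1, hw2⟩ := Set.not_disjoint_iff.mp h
    rw [← cell_eq hL hw1, ← cell_eq hL hw2]

lemma region_nonempty {L : Multiset (Set (E d))} {C : Set (E d)} (hC : C ∈ regions L) :
    C.Nonempty := by
  obtain ⟨x, hx, rfl⟩ := hC
  exact ⟨x, self_mem_cell hx⟩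

lemma shift_mem_inner (hy : y ≠ 0) (p : E d) {ε : ℝ} (hε : 0 < ε) (t : ℝ)
    (htt : t = ε / (2 * ‖y‖)) :
    dist (p + t • y) p < ε ∧ ⟪y, p + t • y⟫ = ⟪y, p⟫ + t * ‖y‖ ^ 2 := by
  have hny : (0 : ℝ) < ‖y‖ := norm_pos_iff.mpr hy
  constructor
  · rw [dist_eq_norm]
    have : p + t • y - p = t • y := by abel
    rw [this, norm_smul, Real.norm_eq_abs, htt, abs_of_pos (by positivity)]
    rw [div_mul_eq_mul_div, div_lt_iff₀ (by positivity)]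
    nlinarith
  · rw [inner_add_right, real_inner_smul_right, real_inner_self_eq_norm_sq]

/-- In an open set we can move off a given hyperplane. -/
lemma open_off_hyperplane (hy : y ≠ 0) {C : Set (E d)} (ho : IsOpen C) {p : E d}
    (hp : p ∈ C) : ∃ q ∈ C, ⟪y, q⟫ ≠ c := by
  by_cases hpH : ⟪y, p⟫ = c
  · obtain ⟨ε, hε, hball⟩ := Metric.isOpen_iff.mp ho p hp
    set t : ℝ := ε / (2 * ‖y‖) with htt
    obtain ⟨hd, hi⟩ := shift_mem_inner hy p hε t htt
    refine ⟨p + t • y, hball (by rwa [Metric.mem_ball]), ?_⟩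
    rw [hi, hpH]
    have hny : (0 : ℝ) < ‖y‖ := norm_pos_iff.mpr hy
    have ht : 0 < t := by rw [htt]; positivity
    have hpos : 0 < t * ‖y‖ ^ 2 := by positivity
    intro hh; linarith
  · exact ⟨p, hp, hpH⟩

/-- An open set containing a point of the hyperplane meets both open sides. -/
lemma open_two_sides (hy : y ≠ 0) {C : Set (E d)} (ho : IsOpen C) {p : E d}
    (hp : p ∈ C) (hpH : ⟪y, p⟫ = c) :
    (C ∩ {z | c < ⟪y, z⟫}).Nonempty ∧ (C ∩ {z | ⟪y, z⟫ < c}).Nonempty := by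
  obtain ⟨ε, hε, hball⟩ := Metric.isOpen_iff.mp ho p hp
  have hny : (0 : ℝ) < ‖y‖ := norm_pos_iff.mpr hy
  set t : ℝ := ε / (2 * ‖y‖) with htt
  have ht : 0 < t := by rw [htt]; positivity
  obtain ⟨hd1, hi1⟩ := shift_mem_inner hy p hε t htt
  have hd2 : dist (p + (-t) • y) p < ε ∧ ⟪y, p + (-t) • y⟫ = ⟪y, p⟫ + (-t) * ‖y‖ ^ 2 := by
    constructor
    · rw [dist_eq_norm]
      have : p + (-t) • y - p = (-t) • y := by abel
      rw [this, norm_smul, Real.norm_eq_abs, abs_neg, abs_of_pos ht, htt]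
      rw [div_mul_eq_mul_div, div_lt_iff₀ (by positivity)]
      nlinarith
    · rw [inner_add_right, real_inner_smul_right, real_inner_self_eq_norm_sq]
  obtain ⟨hd2a, hd2b⟩ := hd2
  have hpos : 0 < t * ‖y‖ ^ 2 := by positivity
  constructor
  · refine ⟨p + t • y, hball (by rwa [Metric.mem_ball]), ?_⟩
    simp only [Set.mem_setOf_eq]
    rw [hi1, hpH]; linarith
  · refine ⟨p + (-t) • y, hball (by rwa [Metric.mem_ball]), ?_⟩
    simp only [Set.mem_setOf_eq]
    rw [hd2b, hpH]; linarith

/-- A convex set meeting both open sides meets the hyperplane. -/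
lemma convex_crossing {C : Set (E d)} (hC : Convex ℝ C) {p q : E d}
    (hp : p ∈ C) (hq : q ∈ C) (hps : c < ⟪y, p⟫) (hqs : ⟪y, q⟫ < c) :
    (C ∩ {z | ⟪y, z⟫ = c}).Nonempty := by
  have hns : ¬ Side {z | ⟪y, z⟫ = c} p q := by
    rw [side_iff (by intro h; linarith) (by intro h; linarith)]
    push_neg
    nlinarith
  rw [Side] at hns
  obtain ⟨w, hw1, hw2⟩ := Set.nonempty_iff_ne_empty.mpr hns
  exact ⟨w, hC.segment_subset hp hq hw1, hw2⟩

end Zas4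

namespace Zas5
open Zas Zas2 Zas3 Zas4

variable {y : E d} {c : ℝ}

lemma region_open {L : Multiset (Set (E d))} (hL : ∀ K ∈ L, IsHyperplane K)
    {C : Set (E d)} (hC : C ∈ regions L) : IsOpen C := by
  obtain ⟨x, hx, rfl⟩ := hC; exact cell_open hL hx

lemma region_convex {L : Multiset (Set (E d))} (hL : ∀ K ∈ L, IsHyperplane K)
    {C : Set (E d)} (hC : C ∈ regions L) : Convex ℝ C := by
  obtain ⟨x, hx, rfl⟩ := hC; exact cell_convex hL hx

lemma regions_eq_or_disjoint {L : Multiset (Set (E d))} (hL : ∀ K ∈ L, IsHyperplane K)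
    {C1 C2 : Set (E d)} (h1 : C1 ∈ regions L) (h2 : C2 ∈ regions L) :
    C1 = C2 ∨ Disjoint C1 C2 := by
  obtain ⟨x1, hx1, rfl⟩ := h1; obtain ⟨x2, hx2, rfl⟩ := h2
  exact cells_eq_or_disjoint hL hx1 hx2

lemma piece_mem_pos {L : Multiset (Set (E d))} (hL : ∀ K ∈ L, IsHyperplane K)
    {C : Set (E d)} (hC : C ∈ regions L) {p : E d} (hp : p ∈ C) (hps : c < ⟪y, p⟫) :
    C ∩ {z | c < ⟪y, z⟫} ∈ regions ({z : E d | ⟪y, z⟫ = c} ::ₘ L) := by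
  obtain ⟨x, hx, rfl⟩ := hC
  have hpU : p ∉ U L := cell_subset_compl hp
  have hceq : cell L p = cell L x := cell_eq hL hp
  refine ⟨p, ?_, ?_⟩
  · intro hcon
    obtain ⟨K, hK, hpK⟩ := mem_U.mp hcon
    rcases Multiset.mem_cons.mp hK with rfl | hK'
    · simp only [Set.mem_setOf_eq] at hpK; linarith
    · exact hpU (mem_U.mpr ⟨K, hK', hpK⟩)
  · rw [cell_cons, hceq, sideSet_pos hps]

lemma piece_mem_neg {L : Multiset (Set (E d))} (hL : ∀ K ∈ L, IsHyperplane K)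
    {C : Set (E d)} (hC : C ∈ regions L) {p : E d} (hp : p ∈ C) (hps : ⟪y, p⟫ < c) :
    C ∩ {z | ⟪y, z⟫ < c} ∈ regions ({z : E d | ⟪y, z⟫ = c} ::ₘ L) := by
  obtain ⟨x, hx, rfl⟩ := hC
  have hpU : p ∉ U L := cell_subset_compl hp
  have hceq : cell L p = cell L x := cell_eq hL hp
  refine ⟨p, ?_, ?_⟩
  · intro hcon
    obtain ⟨K, hK, hpK⟩ := mem_U.mp hcon
    rcases Multiset.mem_cons.mp hK with rfl | hK'
    · simp only [Set.mem_setOf_eq] at hpK; linarith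
    · exact hpU (mem_U.mpr ⟨K, hK', hpK⟩)
  · rw [cell_cons, hceq, sideSet_neg hps]

lemma two_sides_of_meet (hy : y ≠ 0) {L : Multiset (Set (E d))}
    (hL : ∀ K ∈ L, IsHyperplane K) {C : Set (E d)} (hC : C ∈ regions L)
    (hm : (C ∩ {z | ⟪y, z⟫ = c}).Nonempty) :
    (C ∩ {z | c < ⟪y, z⟫}).Nonempty ∧ (C ∩ {z | ⟪y, z⟫ < c}).Nonempty := by
  obtain ⟨p, hpC, hpH⟩ := hm
  exact open_two_sides hy (region_open hL hC) hpC hpH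

/-- The auxiliary "upper piece (or whole)" map. -/
def g1 (y : E d) (c : ℝ) (C : Set (E d)) : Set (E d) :=
  if (C ∩ {z | c < ⟪y, z⟫}).Nonempty then C ∩ {z | c < ⟪y, z⟫} else C ∩ {z | ⟪y, z⟫ < c}

lemma g1_subset (C : Set (E d)) : g1 y c C ⊆ C := by
  rw [g1]; split <;> exact Set.inter_subset_left

lemma g1_nonempty (hy : y ≠ 0) {L : Multiset (Set (E d))} (hL : ∀ K ∈ L, IsHyperplane K)
    {C : Set (E d)} (hC : C ∈ regions L) : (g1 y c C).Nonempty := by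
  rw [g1]
  split
  · assumption
  · next h =>
    obtain ⟨x, hx, rfl⟩ := hC
    obtain ⟨q, hqC, hq⟩ := open_off_hyperplane (c := c) hy (cell_open hL hx) (self_mem_cell hx)
    rcases lt_or_gt_of_ne hq with h1 | h1
    · exact ⟨q, hqC, h1⟩
    · exact absurd ⟨q, hqC, h1⟩ h

lemma g1_mem (hy : y ≠ 0) {L : Multiset (Set (E d))} (hL : ∀ K ∈ L, IsHyperplane K)
    {C : Set (E d)} (hC : C ∈ regions L) :
    g1 y c C ∈ regions ({z : E d | ⟪y, z⟫ = c} ::ₘ L) := by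
  have hne := g1_nonempty hy hL hC (c := c)
  rw [g1] at hne ⊢
  split at hne
  · next h =>
    rw [if_pos h]
    obtain ⟨p, hpC, hps⟩ := h
    exact piece_mem_pos hL hC hpC hps
  · next h =>
    rw [if_neg h]
    obtain ⟨p, hpC, hps⟩ := hne
    exact piece_mem_neg hL hC hpC hps

theorem count_step (hy : y ≠ 0) {L : Multiset (Set (E d))}
    (hL : ∀ K ∈ L, IsHyperplane K) :
    (regions ({z : E d | ⟪y, z⟫ = c} ::ₘ L)).ncard
      = (regions L).ncard
        + {C ∈ regions L | (C ∩ {z : E d | ⟪y, z⟫ = c}).Nonempty}.ncard := by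
  set H : Set (E d) := {z | ⟪y, z⟫ = c} with hHdef
  set Sp : Set (E d) := {z | c < ⟪y, z⟫} with hSp
  set Sm : Set (E d) := {z | ⟪y, z⟫ < c} with hSm
  set M : Set (Set (E d)) := {C ∈ regions L | (C ∩ H).Nonempty} with hM
  have hMsub : M ⊆ regions L := fun C hC => hC.1
  have hRfin : (regions L).Finite := regions_finite hL
  have hMfin : M.Finite := hRfin.subset hMsub
  have himg : regions (H ::ₘ L) = g1 y c '' regions L ∪ (· ∩ Sm) '' M := by
    apply Set.Subset.antisymm
    · rintro C ⟨x, hx, rfl⟩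
      have hxL : x ∉ U L := fun h => by
        obtain ⟨K, hK, hxK⟩ := mem_U.mp h
        exact hx (mem_U.mpr ⟨K, Multiset.mem_cons_of_mem hK, hxK⟩)
      have hxH : x ∉ H := not_mem_hyp hx (Multiset.mem_cons_self H L)
      have hC' : cell L x ∈ regions L := ⟨x, hxL, rfl⟩
      have hxc : x ∈ cell L x := self_mem_cell hxL
      rcases lt_or_gt_of_ne (show ⟪y, x⟫ ≠ c from hxH) with h | h
      · -- lower side
        have hcc : cell (H ::ₘ L) x = cell L x ∩ Sm := by
          rw [cell_cons, hHdef, sideSet_neg h]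
        by_cases hup : (cell L x ∩ Sp).Nonempty
        · right
          have hMm : cell L x ∈ M := by
            obtain ⟨q, hqC, hqs⟩ := hup
            exact ⟨hC', convex_crossing (region_convex hL hC') hqC hxc hqs h⟩
          exact ⟨cell L x, hMm, hcc.symm⟩
        · left
          refine ⟨cell L x, hC', ?_⟩
          rw [g1, if_neg hup, hcc]
      · -- upper side
        left
        have hcc : cell (H ::ₘ L) x = cell L x ∩ Sp := by
          rw [cell_cons, hHdef, sideSet_pos h]
        refine ⟨cell L x, hC', ?_⟩
        rw [g1, if_pos ⟨x, hxc, h⟩, hcc]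
    · rintro C (⟨C', hC', rfl⟩ | ⟨C', hC', rfl⟩)
      · exact g1_mem hy hL hC'
      · obtain ⟨-, ⟨q, hqC, hqs⟩⟩ := (two_sides_of_meet hy hL hC'.1 hC'.2)
        exact piece_mem_neg hL hC'.1 hqC hqs
  have hdisj : Disjoint (g1 y c '' regions L) ((· ∩ Sm) '' M) := by
    rw [Set.disjoint_left]
    rintro D ⟨C1, hC1, rfl⟩ ⟨C2, hC2, heq⟩
    obtain ⟨hup2, hdn2⟩ := two_sides_of_meet hy hL hC2.1 hC2.2
    have hne : (g1 y c C1).Nonempty := by rw [← heq]; exact hdn2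
    have hsub1 : g1 y c C1 ⊆ C1 := g1_subset C1
    have hsub2 : g1 y c C1 ⊆ C2 := by rw [← heq]; exact Set.inter_subset_left
    have hCC : C1 = C2 := by
      rcases regions_eq_or_disjoint hL hC1 hC2.1 with h | h
      · exact h
      · exfalso
        obtain ⟨w, hw⟩ := hne
        exact Set.disjoint_left.mp h (hsub1 hw) (hsub2 hw)
    subst hCC
    have hg1 : g1 y c C1 = C1 ∩ Sp := by rw [g1, if_pos hup2]
    have heq' : C1 ∩ Sm = C1 ∩ Sp := by rw [← hg1]; exact heq
    obtain ⟨w, hw⟩ := hdn2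
    have hwSm : w ∈ C1 ∩ Sm := hw
    have hwSp : w ∈ C1 ∩ Sp := by rw [← heq']; exact hwSm
    have l1 : c < ⟪y, w⟫ := hwSp.2
    have l2 : ⟪y, w⟫ < c := hwSm.2
    linarith
  rw [himg, Set.ncard_union_eq hdisj (hRfin.image _) (hMfin.image _),
    Set.ncard_image_of_injOn, Set.ncard_image_of_injOn]
  · -- injectivity of (· ∩ Sm) on M
    intro C1 h1 C2 h2 heq
    obtain ⟨-, hdn1⟩ := two_sides_of_meet hy hL h1.1 h1.2
    rcases regions_eq_or_disjoint hL h1.1 h2.1 with h | h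
    · exact h
    · exfalso
      obtain ⟨w, hw⟩ := hdn1
      have heq' : C1 ∩ Sm = C2 ∩ Sm := heq
      have hw2 : w ∈ C2 ∩ Sm := by rw [← heq']; exact hw
      exact Set.disjoint_left.mp h hw.1 hw2.1
  · -- injectivity of g1 on regions L
    intro C1 h1 C2 h2 heq
    obtain ⟨w, hw⟩ := g1_nonempty hy hL h1 (c := c)
    have hw2 : w ∈ g1 y c C2 := by rw [← heq]; exact hw
    rcases regions_eq_or_disjoint hL h1 h2 with h | h
    · exact h
    · exact absurd (Set.disjoint_left.mp h (g1_subset C1 hw) (g1_subset C2 hw2)) (fun h => h)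

end Zas5

namespace Zas6
open Zas Zas2 Zas3 Zas4 Zas5

/-- Sum of `f` over the sub-multisets of `L`. -/
def PS {α : Type*} (f : Multiset α → ℤ) (L : Multiset α) : ℤ :=
  ((L.powerset).map f).sum

lemma PS_zero {α : Type*} (f : Multiset α → ℤ) : PS f 0 = f 0 := by
  simp [PS]

lemma PS_cons {α : Type*} (f : Multiset α → ℤ) (a : α) (s : Multiset α) :
    PS f (a ::ₘ s) = PS f s + PS (fun S => f (a ::ₘ S)) s := by
  rw [PS, Multiset.powerset_cons, Multiset.map_add, Multiset.sum_add, Multiset.map_map]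
  rfl

lemma PS_congr {α : Type*} {f g : Multiset α → ℤ} {L : Multiset α}
    (h : ∀ S ≤ L, f S = g S) : PS f L = PS g L := by
  rw [PS, PS]
  congr 1
  apply Multiset.map_congr rfl
  intro S hS
  exact h S (Multiset.mem_powerset.mp hS)

lemma PS_neg {α : Type*} (f : Multiset α → ℤ) (L : Multiset α) :
    PS (fun S => -f S) L = -PS f L := by
  induction L using Multiset.induction generalizing f with
  | empty => simp [PS_zero]
  | cons a s ih =>
    simp only [PS_cons, ih]
    ring

lemma PS_map {α β : Type*} (f : Multiset β → ℤ) (g : α → β) (T : Multiset α) :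
    PS f (T.map g) = PS (fun S => f (S.map g)) T := by
  induction T using Multiset.induction generalizing f with
  | empty => simp [PS_zero]
  | cons a s ih =>
    rw [Multiset.map_cons, PS_cons, PS_cons, ih f, ih (fun S => f (g a ::ₘ S))]
    congr 1
    apply PS_congr
    intro S hS
    simp [Multiset.map_cons]

lemma PS_filter {α : Type*} (f : Multiset α → ℤ) (p : α → Prop) [DecidablePred p]
    {L : Multiset α} (hf : ∀ S ≤ L, (∃ K ∈ S, ¬ p K) → f S = 0) :
    PS f L = PS f (L.filter p) := by
  induction L using Multiset.induction generalizing f with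
  | empty => simp
  | cons a s ih =>
    have hsub : ∀ S ≤ s, (∃ K ∈ S, ¬ p K) → f S = 0 := fun S hS => hf S
      (le_trans hS (Multiset.le_cons_self s a))
    by_cases hp : p a
    · rw [Multiset.filter_cons_of_pos _ hp, PS_cons, PS_cons, ← ih f hsub]
      congr 1
      have step : PS (fun S => f (a ::ₘ S)) s = PS (fun S => f (a ::ₘ S)) (s.filter p) := by
        apply ih
        intro S hS ⟨K, hK, hKp⟩
        exact hf (a ::ₘ S) (Multiset.cons_le_cons a hS) ⟨K, Multiset.mem_cons_of_mem hK, hKp⟩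
      exact step
    · rw [Multiset.filter_cons_of_neg _ hp, PS_cons, ← ih f hsub]
      have : PS (fun S => f (a ::ₘ S)) s = 0 := by
        rw [PS]
        apply Multiset.sum_eq_zero
        intro x hx
        obtain ⟨S, hS, rfl⟩ := Multiset.mem_map.mp hx
        exact hf (a ::ₘ S) (Multiset.cons_le_cons a (Multiset.mem_powerset.mp hS))
          ⟨a, Multiset.mem_cons_self a S, hp⟩
      rw [this]; ring

def minter (S : Multiset (Set (E d))) : Set (E d) := ⋂₀ {H | H ∈ S}

lemma minter_zero : minter (0 : Multiset (Set (E d))) = Set.univ := by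
  simp [minter]

lemma minter_cons {K : Set (E d)} {S : Multiset (Set (E d))} :
    minter (K ::ₘ S) = minter S ∩ K := by
  ext z
  simp only [minter, Set.mem_sInter, Set.mem_setOf_eq, Multiset.mem_cons, Set.mem_inter_iff]
  constructor
  · intro h
    exact ⟨fun H hH => h H (Or.inr hH), h K (Or.inl rfl)⟩
  · rintro ⟨h1, h2⟩ H (rfl | hH)
    · exact h2
    · exact h1 H hH

/-- Whitney-type sum for a multiset of hyperplanes. -/
def W (L : Multiset (Set (E d))) : ℤ :=
  PS (fun S => if (minter S).Nonempty then (-1 : ℤ) ^ (Multiset.card S + sdim (minter S)) else 0) L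

lemma W_zero : W (0 : Multiset (Set (E d))) = (-1 : ℤ) ^ (sdim (Set.univ : Set (E d))) := by
  rw [W, PS_zero, minter_zero, if_pos Set.univ_nonempty]
  simp

lemma W_cons (H : Set (E d)) (L : Multiset (Set (E d))) :
    W (H ::ₘ L) = W L
      + PS (fun S => if (minter S ∩ H).Nonempty then
          (-1 : ℤ) ^ (Multiset.card S + 1 + sdim (minter S ∩ H)) else 0) L := by
  rw [W, PS_cons, ← W]
  congr 1
  apply PS_congr
  intro S hS
  rw [minter_cons, Multiset.card_cons]

lemma W_cons_dup {H : Set (E d)} {L : Multiset (Set (E d))} (hH : H ∈ L) :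
    W (H ::ₘ L) = W L := by
  rw [W_cons]
  obtain ⟨L2, rfl⟩ := Multiset.exists_cons_of_mem hH
  rw [PS_cons]
  have h2 : PS (fun S => if ((minter (H ::ₘ S)) ∩ H).Nonempty then
      (-1 : ℤ) ^ (Multiset.card (H ::ₘ S) + 1 + sdim ((minter (H ::ₘ S)) ∩ H)) else 0) L2
      = PS (fun S => -(if ((minter S) ∩ H).Nonempty then
      (-1 : ℤ) ^ (Multiset.card S + 1 + sdim ((minter S) ∩ H)) else 0)) L2 := by
    apply PS_congr
    intro S hS
    have he : minter (H ::ₘ S) ∩ H = minter S ∩ H := by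
      rw [minter_cons, Set.inter_assoc, Set.inter_self]
    rw [he, Multiset.card_cons]
    split
    · rw [show Multiset.card S + 1 + 1 + sdim (minter S ∩ H)
          = (Multiset.card S + 1 + sdim (minter S ∩ H)) + 1 by ring, pow_succ]
      ring
    · ring
  rw [h2, PS_neg]
  ring

end Zas6

namespace Zas7
open Zas Zas2 Zas3 Zas4 Zas5 Zas6

lemma inner_basept {y : E d} (hy : y ≠ 0) (c : ℝ) : ⟪y, (c / ‖y‖ ^ 2) • y⟫ = c := by
  have hny : ‖y‖ ≠ 0 := norm_ne_zero_iff.mpr hy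
  have hn2 : (0 : ℝ) < ‖y‖ ^ 2 := by positivity
  rw [real_inner_smul_right, real_inner_self_eq_norm_sq]
  field_simp

lemma hyp_subset_eq {y u : E d} (hy : y ≠ 0) (hu : u ≠ 0) {c b : ℝ}
    (hsub : {z : E d | ⟪y, z⟫ = c} ⊆ {z : E d | ⟪u, z⟫ = b}) :
    {z : E d | ⟪y, z⟫ = c} = {z : E d | ⟪u, z⟫ = b} := by
  have hny : ‖y‖ ≠ 0 := norm_ne_zero_iff.mpr hy
  have hn2 : (0 : ℝ) < ‖y‖ ^ 2 := by positivity
  set p0 : E d := (c / ‖y‖ ^ 2) • y with hp0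
  have hp0H : ⟪y, p0⟫ = c := inner_basept hy c
  have hup0 : ⟪u, p0⟫ = b := hsub hp0H
  have horth : ∀ v : E d, ⟪y, v⟫ = 0 → ⟪u, v⟫ = 0 := by
    intro v hv
    have h1 : ⟪y, p0 + v⟫ = c := by rw [inner_add_right, hp0H, hv, add_zero]
    have h2 : ⟪u, p0 + v⟫ = b := hsub h1
    rw [inner_add_right, hup0] at h2
    linarith
  have humem : u ∈ ((Submodule.span ℝ {y})ᗮ)ᗮ := by
    intro v hv
    have : ⟪v, y⟫ = 0 := Submodule.mem_orthogonal_singleton_iff_inner_left.mp hv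
    rw [real_inner_comm]
    exact horth v (by rwa [real_inner_comm] at this)
  rw [Submodule.orthogonal_orthogonal] at humem
  obtain ⟨t, rfl⟩ := Submodule.mem_span_singleton.mp humem
  have ht : t ≠ 0 := by rintro rfl; simp at hu
  have hb : t * c = b := by
    rw [← hup0, real_inner_smul_left, hp0H]
  ext z
  simp only [Set.mem_setOf_eq, real_inner_smul_left]
  constructor
  · intro h; rw [h, hb]
  · intro h
    rw [← hb] at h
    exact mul_left_cancel₀ ht h

lemma sdim_image {e : ℕ} (φ : E e →ᵃ[ℝ] E d) (hinj : Function.Injective φ.linear)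
    (T : Set (E e)) : sdim (φ '' T) = sdim T := by
  rw [sdim, sdim, ← AffineSubspace.map_span φ T, AffineSubspace.map_direction]
  exact ((Submodule.equivMapOfInjective φ.linear hinj
    (affineSpan ℝ T).direction).finrank_eq).symm

lemma image_preimage_phi {e : ℕ} {φ : E e →ᵃ[ℝ] E d} {H : Set (E d)}
    (hrange : Set.range ⇑φ = H) (X : Set (E d)) : φ '' (φ ⁻¹' X) = X ∩ H := by
  rw [Set.image_preimage_eq_inter_range, hrange]

lemma sdim_preimage {e : ℕ} {φ : E e →ᵃ[ℝ] E d} {H : Set (E d)}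
    (hrange : Set.range ⇑φ = H) (hinj : Function.Injective φ.linear) (X : Set (E d)) :
    sdim (φ ⁻¹' X) = sdim (X ∩ H) := by
  rw [← image_preimage_phi hrange X, sdim_image φ hinj]

lemma nonempty_preimage_phi {e : ℕ} {φ : E e →ᵃ[ℝ] E d} {H : Set (E d)}
    (hrange : Set.range ⇑φ = H) (X : Set (E d)) :
    (φ ⁻¹' X).Nonempty ↔ (X ∩ H).Nonempty := by
  rw [← image_preimage_phi hrange X, Set.image_nonempty]

lemma minter_map_preimage {e : ℕ} (φ : E e →ᵃ[ℝ] E d) (S : Multiset (Set (E d))) :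
    minter (S.map (fun K => φ ⁻¹' K)) = φ ⁻¹' (minter S) := by
  ext w
  simp only [minter, Set.mem_sInter, Set.mem_setOf_eq, Multiset.mem_map, Set.mem_preimage]
  constructor
  · intro h K hK
    exact h (φ ⁻¹' K) ⟨K, hK, rfl⟩
  · rintro h K' ⟨K, hK, rfl⟩
    exact h K hK

lemma hyp_preimage {e : ℕ} {φ : E e →ᵃ[ℝ] E (e + 1)} {y : E (e + 1)} {c : ℝ}
    (hy : y ≠ 0) (hinj : Function.Injective φ.linear)
    (hrange : Set.range ⇑φ = {z : E (e + 1) | ⟪y, z⟫ = c})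
    {u : E (e + 1)} {b : ℝ} (hu : u ≠ 0)
    (hne : (({z : E (e + 1) | ⟪u, z⟫ = b}) ∩ {z : E (e + 1) | ⟪y, z⟫ = c}).Nonempty)
    (hneq : ({z : E (e + 1) | ⟪u, z⟫ = b}) ≠ {z : E (e + 1) | ⟪y, z⟫ = c}) :
    IsHyperplane (φ ⁻¹' {z : E (e + 1) | ⟪u, z⟫ = b}) := by
  set u' : E e := LinearMap.adjoint φ.linear u with hu'
  refine ⟨u', b - ⟪u, φ 0⟫, ?_, ?_⟩
  · -- u' ≠ 0
    intro hu0
    have hconst : ∀ w : E e, ⟪u, φ.linear w⟫ = 0 := by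
      intro w
      have := LinearMap.adjoint_inner_left φ.linear w u
      rw [← hu', hu0] at this
      simp only [inner_zero_left] at this
      exact this.symm
    have hval : ∀ z ∈ {z : E (e + 1) | ⟪y, z⟫ = c}, ⟪u, z⟫ = ⟪u, φ 0⟫ := by
      intro z hz
      rw [← hrange] at hz
      obtain ⟨w, rfl⟩ := hz
      have hdec : φ w = φ.linear w + φ 0 := by
        have h2 := congrFun (AffineMap.decomp φ) w
        simpa using h2
      rw [hdec, inner_add_right, hconst w, zero_add]
    obtain ⟨p, hpK, hpH⟩ := hne
    have hHsubK : {z : E (e + 1) | ⟪y, z⟫ = c} ⊆ {z : E (e + 1) | ⟪u, z⟫ = b} := by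
      intro z hz
      have h1 := hval z hz
      have h2 := hval p hpH
      have h3 : ⟪u, p⟫ = b := hpK
      simp only [Set.mem_setOf_eq]
      rw [h1, ← h2, h3]
    exact hneq (hyp_subset_eq hy hu hHsubK).symm
  · ext w
    simp only [Set.mem_preimage, Set.mem_setOf_eq]
    have hdec : φ w = φ.linear w + φ 0 := by
      have := AffineMap.decomp φ
      have h2 := congrFun this w
      simpa using h2
    rw [hdec, inner_add_right, ← LinearMap.adjoint_inner_left φ.linear w u, ← hu']
    constructor
    · intro h; linarith
    · intro h; linarith

end Zas7

namespace Zas8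
open Zas Zas2 Zas3 Zas4 Zas5 Zas6 Zas7

lemma exists_phi {e : ℕ} {y : E (e + 1)} (hy : y ≠ 0) (c : ℝ) :
    ∃ φ : E e →ᵃ[ℝ] E (e + 1), Function.Injective ⇑φ ∧ Function.Injective φ.linear ∧
      Set.range ⇑φ = {z : E (e + 1) | ⟪y, z⟫ = c} := by
  have hny : ‖y‖ ≠ 0 := norm_ne_zero_iff.mpr hy
  have hn2 : (0 : ℝ) < ‖y‖ ^ 2 := by positivity
  have hWrank0 : Module.finrank ℝ ((Submodule.span ℝ ({y} : Set (E (e + 1))))ᗮ) = e := by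
    have h1 : Module.finrank ℝ (Submodule.span ℝ ({y} : Set (E (e + 1)))) = 1 :=
      finrank_span_singleton hy
    have h2 := Submodule.finrank_add_finrank_orthogonal
      (𝕜 := ℝ) (Submodule.span ℝ ({y} : Set (E (e + 1))))
    rw [h1, finrank_euclideanSpace_fin] at h2
    omega
  set Wm : Submodule ℝ (E (e + 1)) := (Submodule.span ℝ {y})ᗮ with hWm
  have hWrank : Module.finrank ℝ Wm = e := hWrank0
  set bb : OrthonormalBasis (Fin e) ℝ Wm := (stdOrthonormalBasis ℝ Wm).reindex (finCongr hWrank)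
    with hbb
  set ψ : E e →ₗ[ℝ] E (e + 1) :=
    Wm.subtype ∘ₗ (bb.repr.symm.toLinearEquiv : E e ≃ₗ[ℝ] Wm).toLinearMap with hψ
  have hψrange : LinearMap.range ψ = Wm := by
    rw [hψ, LinearMap.range_comp, LinearEquiv.range, Submodule.map_top, Submodule.range_subtype]
  have hψinj : Function.Injective ψ := by
    rw [hψ, LinearMap.coe_comp]
    exact Wm.injective_subtype.comp bb.repr.symm.toLinearEquiv.injective
  have hψmem : ∀ w : E e, ⟪y, ψ w⟫ = 0 := by
    intro w
    have hmem : ψ w ∈ Wm := hψrange ▸ LinearMap.mem_range_self ψ w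
    have := Submodule.mem_orthogonal_singleton_iff_inner_left.mp hmem
    rwa [real_inner_comm] at this
  set p : E (e + 1) := (c / ‖y‖ ^ 2) • y with hp
  have hyp : ⟪y, p⟫ = c := inner_basept hy c
  have key : ∀ w : E e, p + ψ w = ψ (w -ᵥ (0 : E e)) +ᵥ (p + ψ 0) := by
    intro w
    simp only [vsub_eq_sub, sub_zero, map_zero, add_zero, vadd_eq_add]
    abel
  set φ : E e →ᵃ[ℝ] E (e + 1) := AffineMap.mk' (fun w => p + ψ w) ψ 0 (fun w => key w) with hφ
  have hcoe : ⇑φ = fun w => p + ψ w := AffineMap.coe_mk' _ _ _ _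
  have hlin : φ.linear = ψ := rfl
  refine ⟨φ, ?_, ?_, ?_⟩
  · intro w1 w2 h
    rw [hcoe] at h
    simp only at h
    exact hψinj (by apply add_left_cancel h)
  · rw [hlin]; exact hψinj
  · ext z
    simp only [Set.mem_range, hcoe, Set.mem_setOf_eq]
    constructor
    · rintro ⟨w, rfl⟩
      rw [inner_add_right, hyp, hψmem w, add_zero]
    · intro hz
      have h1 : ⟪z, y⟫ = c := by rw [real_inner_comm]; exact hz
      have h2 : ⟪p, y⟫ = c := by rw [real_inner_comm]; exact hyp
      have hmem : z - p ∈ Wm := by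
        apply Submodule.mem_orthogonal_singleton_iff_inner_left.mpr
        rw [inner_sub_left, h1, h2, sub_self]
      rw [← hψrange] at hmem
      obtain ⟨w, hw⟩ := hmem
      exact ⟨w, by rw [hw]; abel⟩

end Zas8

namespace Zas9
open Zas Zas2 Zas3 Zas4 Zas5 Zas6 Zas7 Zas8

lemma minter_subset {K : Set (E d)} {S : Multiset (Set (E d))} (hK : K ∈ S) :
    minter S ⊆ K := fun z hz => hz K hK

lemma side_transport {e : ℕ} (φ : E e →ᵃ[ℝ] E (e + 1)) (K : Set (E (e + 1))) (w z : E e) :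
    Side (φ ⁻¹' K) w z ↔ Side K (φ w) (φ z) := by
  have himg : φ '' (segment ℝ w z ∩ φ ⁻¹' K) = segment ℝ (φ w) (φ z) ∩ K := by
    rw [Set.image_inter_preimage, image_segment]
  rw [Side, Side]
  constructor
  · intro h
    rw [← himg, h, Set.image_empty]
  · intro h
    have := himg.trans h
    rwa [Set.image_eq_empty] at this

lemma cell_transport {e : ℕ} {φ : E e →ᵃ[ℝ] E (e + 1)} {H : Set (E (e + 1))}
    (hrange : Set.range ⇑φ = H) (L : Multiset (Set (E (e + 1)))) {x : E (e + 1)}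
    (hxH : x ∈ H) {w : E e} (hw : φ w = x) :
    φ ⁻¹' (cell L x) =
      cell ((L.filter (fun K => (K ∩ H).Nonempty)).map (fun K => φ ⁻¹' K)) w := by
  ext z
  simp only [Set.mem_preimage, cell, Set.mem_setOf_eq]
  constructor
  · intro h K' hK'
    obtain ⟨K, hKf, rfl⟩ := Multiset.mem_map.mp hK'
    obtain ⟨hKL, -⟩ := Multiset.mem_filter.mp hKf
    rw [side_transport, hw]
    exact h K hKL
  · intro h K hKL
    by_cases hKH : (K ∩ H).Nonempty
    · have := h (φ ⁻¹' K) (Multiset.mem_map.mpr ⟨K, Multiset.mem_filter.mpr ⟨hKL, hKH⟩, rfl⟩)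
      rw [side_transport, hw] at this
      exact this
    · -- K misses H entirely, and the segment lives in H
      rw [Side, ← hw]
      have hseg : segment ℝ (φ w) (φ z) ⊆ H := by
        rw [← image_segment]
        rintro q ⟨q', -, rfl⟩
        rw [← hrange]
        exact Set.mem_range_self q'
      apply Set.eq_empty_of_subset_empty
      intro q hq
      exact absurd ⟨q, hq.2, hseg hq.1⟩ hKH

lemma region_restrict {e : ℕ} {φ : E e →ᵃ[ℝ] E (e + 1)} {H : Set (E (e + 1))}
    (hrange : Set.range ⇑φ = H) {L : Multiset (Set (E (e + 1)))}
    (hL : ∀ K ∈ L, IsHyperplane K) :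
    (regions ((L.filter (fun K => (K ∩ H).Nonempty)).map (fun K => φ ⁻¹' K))).ncard
      = {C ∈ regions L | (C ∩ H).Nonempty}.ncard := by
  set Lres := (L.filter (fun K => (K ∩ H).Nonempty)).map (fun K => φ ⁻¹' K) with hLres
  set M : Set (Set (E (e + 1))) := {C ∈ regions L | (C ∩ H).Nonempty} with hM
  have himage : (fun C => φ ⁻¹' C) '' M = regions Lres := by
    apply Set.Subset.antisymm
    · rintro C' ⟨C, ⟨⟨x0, hx0, rfl⟩, ⟨p, hpC, hpH⟩⟩, rfl⟩
      have hcp : cell L p = cell L x0 := cell_eq hL hpC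
      have hpU : p ∉ U L := cell_subset_compl hpC
      have hpH' : p ∈ Set.range ⇑φ := by rw [hrange]; exact hpH
      obtain ⟨w, hw⟩ := hpH'
      refine ⟨w, ?_, ?_⟩
      · intro hcon
        obtain ⟨K', hK', hwK'⟩ := mem_U.mp hcon
        obtain ⟨K, hKf, rfl⟩ := Multiset.mem_map.mp hK'
        obtain ⟨hKL, -⟩ := Multiset.mem_filter.mp hKf
        apply hpU
        apply mem_U.mpr ⟨K, hKL, ?_⟩
        rw [← hw]
        exact hwK'
      · rw [← hcp, ← cell_transport hrange L hpH hw]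
    · rintro C' ⟨w, hwU, rfl⟩
      set x := φ w with hx
      have hxH : x ∈ H := by rw [← hrange]; exact Set.mem_range_self w
      have hxU : x ∉ U L := by
        intro hcon
        obtain ⟨K, hK, hxK⟩ := mem_U.mp hcon
        by_cases hKH : (K ∩ H).Nonempty
        · have hKmem : (φ ⁻¹' K) ∈ Lres := by
            rw [hLres]
            exact Multiset.mem_map.mpr ⟨K, Multiset.mem_filter.mpr ⟨hK, hKH⟩, rfl⟩
          exact hwU (mem_U.mpr ⟨φ ⁻¹' K, hKmem, hxK⟩)
        · exact hKH ⟨x, hxK, hxH⟩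
      refine ⟨cell L x, ⟨⟨x, hxU, rfl⟩, ⟨x, self_mem_cell hxU, hxH⟩⟩, ?_⟩
      exact cell_transport hrange L hxH rfl
  have hinjOn : Set.InjOn (fun C => φ ⁻¹' C) M := by
    intro C1 h1 C2 h2 h
    have himg : C1 ∩ H = C2 ∩ H := by
      rw [← image_preimage_phi hrange C1, ← image_preimage_phi hrange C2]
      simp only at h
      rw [h]
    obtain ⟨q, hq1, hqH⟩ := h1.2
    have hq2 : q ∈ C2 ∩ H := by rw [← himg]; exact ⟨hq1, hqH⟩
    rcases regions_eq_or_disjoint hL h1.1 h2.1 with heq | hdis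
    · exact heq
    · exact absurd (Set.disjoint_left.mp hdis hq1 hq2.1) (fun hh => hh)
  rw [← himage, Set.ncard_image_of_injOn hinjOn]

lemma regions_zero : regions (0 : Multiset (Set (E d))) = {Set.univ} := by
  apply Set.Subset.antisymm
  · rintro C ⟨x, hx, rfl⟩
    simp only [Set.mem_singleton_iff]
    ext z; simp [cell]
  · rintro C hC
    rw [Set.mem_singleton_iff] at hC
    refine ⟨0, ?_, ?_⟩
    · intro h; obtain ⟨K, hK, -⟩ := mem_U.mp h; exact absurd hK (Multiset.notMem_zero K)
    · rw [hC]; ext z; simp [cell]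

lemma sdim_univ : sdim (Set.univ : Set (E d)) = d := by
  rw [sdim, AffineSubspace.span_univ, AffineSubspace.direction_top]
  rw [finrank_top, finrank_euclideanSpace_fin]

end Zas9

namespace Zas10
open Zas Zas2 Zas3 Zas4 Zas5 Zas6 Zas7 Zas8 Zas9

theorem master : ∀ (n : ℕ) {d : ℕ} (L : Multiset (Set (E d))),
    d + Multiset.card L ≤ n → (∀ K ∈ L, IsHyperplane K) →
    ((regions L).ncard : ℤ) = (-1 : ℤ) ^ d * W L := by
  intro n
  induction n with
  | zero =>
    intro d L hle hL
    have hd : d = 0 := by omega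
    have hL0 : L = 0 := Multiset.card_eq_zero.mp (by omega)
    subst hL0; subst hd
    rw [regions_zero, W_zero, sdim_univ, Set.ncard_singleton]
    norm_num
  | succ n ih =>
    intro d L hle hL
    by_cases hL0 : L = 0
    · subst hL0
      rw [regions_zero, W_zero, sdim_univ, Set.ncard_singleton, ← pow_add]
      exact (Even.neg_one_pow ⟨d, rfl⟩).symm
    · obtain ⟨H, hHL⟩ := Multiset.exists_mem_of_ne_zero hL0
      obtain ⟨L', rfl⟩ := Multiset.exists_cons_of_mem hHL
      obtain ⟨y, c, hy, hHe⟩ := hL H (Multiset.mem_cons_self H L')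
      subst hHe
      have hL' : ∀ K ∈ L', IsHyperplane K := fun K hK => hL K (Multiset.mem_cons_of_mem hK)
      cases d with
      | zero => exact absurd (Subsingleton.elim y 0) hy
      | succ e =>
        have hdel : ((regions L').ncard : ℤ) = (-1 : ℤ) ^ (e + 1) * W L' := by
          apply ih L' ?_ hL'
          rw [Multiset.card_cons] at hle
          omega
        rw [count_step hy hL']
        by_cases hdup : ({z : E (e + 1) | ⟪y, z⟫ = c}) ∈ L'
        · have hM0 : {C ∈ regions L' | (C ∩ {z : E (e + 1) | ⟪y, z⟫ = c}).Nonempty} = ∅ := by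
            ext C
            simp only [Set.mem_setOf_eq, Set.mem_empty_iff_false, iff_false]
            rintro ⟨⟨x0, hx0, rfl⟩, ⟨p, hpC, hpH⟩⟩
            exact cell_subset_compl hpC (mem_U.mpr ⟨_, hdup, hpH⟩)
          rw [hM0, W_cons_dup hdup]
          push_cast [Set.ncard_empty]
          rw [hdel]
          ring
        · obtain ⟨φ, hφinj, hφlin, hφrange⟩ := exists_phi hy c
          set Lres := (L'.filter (fun K => (K ∩ {z : E (e + 1) | ⟪y, z⟫ = c}).Nonempty)).map
            (fun K => φ ⁻¹' K) with hLresDef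
          have hLresHyp : ∀ K' ∈ Lres, IsHyperplane K' := by
            intro K' hK'
            rw [hLresDef] at hK'
            obtain ⟨K, hKf, rfl⟩ := Multiset.mem_map.mp hK'
            obtain ⟨hKL, hKH⟩ := Multiset.mem_filter.mp hKf
            obtain ⟨u, b, hu, hKe⟩ := hL' K hKL
            subst hKe
            exact hyp_preimage hy hφlin hφrange hu hKH (fun hcon => hdup (hcon ▸ hKL))
          have hgeo : (regions Lres).ncard
              = {C ∈ regions L' | (C ∩ {z : E (e + 1) | ⟪y, z⟫ = c}).Nonempty}.ncard :=
            region_restrict hφrange hL'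
          have hres : ((regions Lres).ncard : ℤ) = (-1 : ℤ) ^ e * W Lres := by
            apply ih Lres ?_ hLresHyp
            have hc1 : Multiset.card Lres ≤ Multiset.card L' := by
              rw [hLresDef, Multiset.card_map]
              exact Multiset.card_le_card (Multiset.filter_le _ L')
            rw [Multiset.card_cons] at hle
            omega
          have hM : (({C ∈ regions L' |
                (C ∩ {z : E (e + 1) | ⟪y, z⟫ = c}).Nonempty}).ncard : ℤ)
              = (-1 : ℤ) ^ e * W Lres := by
            rw [← hgeo]; exact hres
          have hcomb : W (({z : E (e + 1) | ⟪y, z⟫ = c}) ::ₘ L') = W L' - W Lres := by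
            rw [W_cons]
            have hW : W Lres = PS (fun S => if (minter S ∩ {z : E (e + 1) | ⟪y, z⟫ = c}).Nonempty
                then (-1 : ℤ) ^ (Multiset.card S + sdim (minter S ∩ {z : E (e + 1) | ⟪y, z⟫ = c}))
                else 0) L' := by
              rw [W, hLresDef, PS_map]
              have hterm : PS (fun S => if (minter (S.map (fun K => φ ⁻¹' K))).Nonempty
                    then (-1 : ℤ) ^ (Multiset.card (S.map (fun K => φ ⁻¹' K))
                      + sdim (minter (S.map (fun K => φ ⁻¹' K)))) else 0)
                  (L'.filter (fun K => (K ∩ {z : E (e + 1) | ⟪y, z⟫ = c}).Nonempty))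
                  = PS (fun S => if (minter S ∩ {z : E (e + 1) | ⟪y, z⟫ = c}).Nonempty
                then (-1 : ℤ) ^ (Multiset.card S + sdim (minter S ∩ {z : E (e + 1) | ⟪y, z⟫ = c}))
                else 0) (L'.filter (fun K => (K ∩ {z : E (e + 1) | ⟪y, z⟫ = c}).Nonempty)) := by
                apply PS_congr
                intro S hS
                simp only [minter_map_preimage, Multiset.card_map,
                  nonempty_preimage_phi hφrange, sdim_preimage hφrange hφlin]
              rw [hterm]
              symm
              apply PS_filter
              intro S hS ⟨K, hK, hKp⟩
              rw [if_neg]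
              rintro ⟨q, hq1, hq2⟩
              exact hKp ⟨q, minter_subset hK hq1, hq2⟩
            have hptw : PS (fun S => if (minter S ∩ {z : E (e + 1) | ⟪y, z⟫ = c}).Nonempty
                then (-1 : ℤ) ^ (Multiset.card S + 1
                  + sdim (minter S ∩ {z : E (e + 1) | ⟪y, z⟫ = c})) else 0) L'
                = - W Lres := by
              rw [hW, ← PS_neg]
              apply PS_congr
              intro S hS
              split
              · rw [show Multiset.card S + 1
                    + sdim (minter S ∩ {z : E (e + 1) | ⟪y, z⟫ = c})
                    = (Multiset.card S + sdim (minter S ∩ {z : E (e + 1) | ⟪y, z⟫ = c})) + 1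
                  by ring, pow_succ]
                ring
              · ring
            rw [hptw]
            ring
          push_cast
          rw [hdel, hM, hcomb, pow_succ]
          ring

end Zas10

namespace Zas11
open Zas Zas2 Zas3 Zas4 Zas5 Zas6 Zas7 Zas8 Zas9 Zas10

lemma PS_finset (g : Multiset (Set (E d)) → ℤ) (A : Finset (Set (E d))) :
    PS g A.val = ∑ B ∈ A.powerset, g B.val := by
  induction A using Finset.induction generalizing g with
  | empty => simp [PS_zero]
  | @insert a s ha ih =>
    rw [Finset.insert_val_of_notMem ha, PS_cons, ih g, Finset.sum_powerset_insert ha,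
      ih (fun S => g (a ::ₘ S))]
    congr 1
    apply Finset.sum_congr rfl
    intro B hB
    have haB : a ∉ B := fun hc => ha (Finset.mem_powerset.mp hB hc)
    rw [Finset.insert_val_of_notMem haB]

end Zas11

namespace Zas12
open Zas Zas2 Zas3 Zas4 Zas5 Zas6 Zas7 Zas8 Zas9 Zas10 Zas11

lemma interSet_eq (B : Finset (Set (E d))) : interSet B = minter B.val := by
  ext z
  simp only [interSet, Set.mem_iInter, minter, Set.mem_sInter, Set.mem_setOf_eq]
  constructor
  · intro h K hK; exact h K hK
  · intro h K hK; exact h K hK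

lemma sdim_le (F : Set (E d)) : sdim F ≤ d := by
  rw [sdim]
  have := Submodule.finrank_le (affineSpan ℝ F).direction
  rwa [finrank_euclideanSpace_fin] at this

lemma union_eq (A : Finset (Set (E d))) : (⋃ H ∈ A, H) = U A.val := by
  ext z
  simp only [Set.mem_iUnion, U, Set.mem_sUnion, Set.mem_setOf_eq, exists_prop]
  constructor
  · rintro ⟨K, hK, hz⟩; exact ⟨K, hK, hz⟩
  · rintro ⟨K, hK, hz⟩; exact ⟨K, hK, hz⟩

theorem main2 (A : Finset (Set (E d))) (hA : ∀ H ∈ A, IsHyperplane H) :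
    (Set.ncard {P : Set (E d) | IsChamber A P} : ℤ)
      = (-1 : ℤ) ^ d * ∑ B ∈ A.powerset,
          if (interSet B).Nonempty then (-1 : ℤ) ^ B.card * (-1 : ℤ) ^ sdim (interSet B)
          else 0 := by
  have hval : ∀ K ∈ A.val, IsHyperplane K := fun K hK => hA K hK
  have hcham : {P : Set (E d) | IsChamber A P}
      = {P : Set (E d) | IsChamberOfUnion (U A.val) P} := by
    unfold IsChamber
    rw [union_eq]
  rw [hcham, ncard_chambers_eq hval,
    master (d + Multiset.card A.val) A.val le_rfl hval]
  congr 1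
  rw [W, PS_finset]
  apply Finset.sum_congr rfl
  intro B hB
  rw [← interSet_eq]
  have hcard : Multiset.card B.val = B.card := rfl
  rw [hcard]
  split
  · rw [pow_add]
  · rfl

theorem main1 (A : Finset (Set (E d))) :
    ∑ k ∈ Finset.range (d + 1), charCoeff A k
      = (-1 : ℤ) ^ d * ∑ B ∈ A.powerset,
          if (interSet B).Nonempty then (-1 : ℤ) ^ B.card * (-1 : ℤ) ^ sdim (interSet B)
          else 0 := by
  unfold charCoeff
  rw [Finset.sum_congr rfl (fun k _ => Finset.mul_sum _ _ _), Finset.sum_comm,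
    Finset.mul_sum]
  apply Finset.sum_congr rfl
  intro B hB
  by_cases hne : (interSet B).Nonempty
  · rw [if_pos hne]
    have h0 : ∀ k ∈ Finset.range (d + 1), k ≠ sdim (interSet B) →
        (-1 : ℤ) ^ (d - k) * (if (interSet B).Nonempty ∧ sdim (interSet B) = k
          then (-1 : ℤ) ^ B.card else 0) = 0 := by
      intro k hk hkne
      rw [if_neg, mul_zero]
      rintro ⟨-, h⟩
      exact hkne h.symm
    have h1 : sdim (interSet B) ∉ Finset.range (d + 1) →
        (-1 : ℤ) ^ (d - sdim (interSet B)) * (if (interSet B).Nonempty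
          ∧ sdim (interSet B) = sdim (interSet B) then (-1 : ℤ) ^ B.card else 0) = 0 :=
      fun hmem => absurd
        (Finset.mem_range.mpr (Nat.lt_succ_of_le (sdim_le (interSet B)))) hmem
    rw [Finset.sum_eq_single (sdim (interSet B)) h0 h1, if_pos ⟨hne, rfl⟩]
    have hs : sdim (interSet B) ≤ d := sdim_le (interSet B)
    have hsign : (-1 : ℤ) ^ d * (-1 : ℤ) ^ (sdim (interSet B))
        = (-1 : ℤ) ^ (d - sdim (interSet B)) := by
      rw [← pow_add, show d + sdim (interSet B)
          = (d - sdim (interSet B)) + 2 * sdim (interSet B) by omega, pow_add, pow_mul]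
      norm_num
    rw [← hsign]
    ring
  · rw [if_neg hne, mul_zero]
    apply Finset.sum_eq_zero
    intro k hk
    rw [if_neg, mul_zero]
    rintro ⟨h, -⟩
    exact hne h

theorem stmt8' {d : ℕ} (A : Finset (Set (E d)))
    (hA : ∀ H ∈ A, IsHyperplane H) :
    (Set.ncard {P : Set (E d) | IsChamber A P} : ℤ)
      = ∑ k ∈ Finset.range (d + 1), charCoeff A k ∧
    (Set.ncard {P : Set (E d) | IsChamber A P} : ℤ)
      = (-1 : ℤ) ^ d * ∑ B ∈ A.powerset,
          if (interSet B).Nonempty then (-1 : ℤ) ^ B.card * (-1 : ℤ) ^ sdim (interSet B)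
          else 0 := by
  refine ⟨?_, main2 A hA⟩
  rw [main2 A hA, ← main1 A]

end Zas12

/-- Zaslavsky's first formula: the number of closed chambers
equals `Σ_k a_k = (-1)^d χ_A(-1)`. -/
theorem stmt8 {d : ℕ} (A : Finset (Set (E d)))
    (hA : ∀ H ∈ A, IsHyperplane H) :
    (Set.ncard {P : Set (E d) | IsChamber A P} : ℤ)
      = ∑ k ∈ Finset.range (d + 1), charCoeff A k ∧
    (Set.ncard {P : Set (E d) | IsChamber A P} : ℤ)
      = (-1 : ℤ) ^ d * ∑ B ∈ A.powerset,
          if (interSet B).Nonempty then (-1 : ℤ) ^ B.card * (-1 : ℤ) ^ sdim (interSet B)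
          else 0 := by
  exact Zas12.stmt8' A hA
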